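/- (Serre) Let p > 3 be a prime and let Δ be a closed subgroup of SL₂(ℤ_p) such that the reduction map ρ_p : SL₂(ℤ_p) → SL₂(𝔽_p) satisfies ρ_p(Δ) = SL₂(𝔽_p). Then Δ = SL₂(ℤ_p). -/

import Mathlib

/-- `SL₂(ℤ_p)` carries the topology induced from the entrywise `p`-adic
topology on `2×2` matrices over `ℤ_p`. -/
noncomputable instance SL2Padic.topologicalSpace (p : ℕ) [Fact p.Prime] :
    TopologicalSpace (Matrix.SpecialLinearGroup (Fin 2) ℤ_[p]) :=
  TopologicalSpace.induced
    ((↑) : Matrix.SpecialLinearGroup (Fin 2) ℤ_[p] → Matrix (Fin 2) (Fin 2) ℤ_[p])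
    inferInstance

namespace SerreSL2
open Matrix Finset

open Matrix
section
variable (p : ℕ) [Fact p.Prime]
abbrev Mx := Matrix (Fin 2) (Fin 2) ℤ_[p]
/-- congruence mod p^m, entrywise. -/
def Cong (m : ℕ) (X Y : Mx p) : Prop := ∃ C : Mx p, X = Y + ((p:ℤ_[p])^m) • C
variable {p}
theorem cong_refl (m : ℕ) (X : Mx p) : Cong p m X X := ⟨0, by simp⟩
theorem cong_of_eq {m : ℕ} {X Y : Mx p} (h : X = Y) : Cong p m X Y := ⟨0, by simp [h]⟩
theorem cong_symm {m : ℕ} {X Y : Mx p} (h : Cong p m X Y) : Cong p m Y X := by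
  obtain ⟨C, rfl⟩ := h; exact ⟨-C, by simp⟩
theorem cong_trans {m : ℕ} {X Y Z : Mx p} (h : Cong p m X Y) (h' : Cong p m Y Z) :
    Cong p m X Z := by
  obtain ⟨C, rfl⟩ := h; obtain ⟨D, rfl⟩ := h'
  exact ⟨D + C, by rw [add_assoc, smul_add]⟩
theorem cong_add {m : ℕ} {X Y Z W : Mx p} (h : Cong p m X Y) (h' : Cong p m Z W) :
    Cong p m (X + Z) (Y + W) := by
  obtain ⟨C, rfl⟩ := h; obtain ⟨D, rfl⟩ := h'
  exact ⟨C + D, by rw [smul_add]; abel⟩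
theorem cong_mul {m : ℕ} {X Y Z W : Mx p} (h : Cong p m X Y) (h' : Cong p m Z W) :
    Cong p m (X * Z) (Y * W) := by
  obtain ⟨C, rfl⟩ := h; obtain ⟨D, rfl⟩ := h'
  refine ⟨C * W + Y * D + (p:ℤ_[p])^m • (C * D), ?_⟩
  simp only [mul_add, add_mul, smul_mul_assoc, mul_smul_comm, smul_add, smul_smul]
  abel
theorem cong_pow {m : ℕ} {X Y : Mx p} (h : Cong p m X Y) (k : ℕ) :
    Cong p m (X ^ k) (Y ^ k) := by
  induction k with
  | zero => simpa using cong_refl m 1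
  | succ n ih => rw [pow_succ, pow_succ]; exact cong_mul ih h
theorem cong_weaken {m k : ℕ} (hkm : k ≤ m) {X Y : Mx p} (h : Cong p m X Y) :
    Cong p k X Y := by
  obtain ⟨C, rfl⟩ := h
  exact ⟨(p:ℤ_[p])^(m-k) • C, by rw [smul_smul, ← pow_add, Nat.add_sub_cancel' hkm]⟩
theorem cong_smul_p {m : ℕ} {X Y : Mx p} (h : Cong p m X Y) :
    Cong p (m+1) ((p:ℤ_[p]) • X) ((p:ℤ_[p]) • Y) := by
  obtain ⟨C, rfl⟩ := h
  exact ⟨C, by rw [smul_add, smul_smul, pow_succ]; ring_nf⟩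
end
theorem six_mul_sum_sq (n : ℕ) :
    6 * ∑ i ∈ range n, (i:ℤ)^2 = n * ((n:ℤ) - 1) * (2*n - 1) := by
  induction n with
  | zero => simp
  | succ m ih => rw [sum_range_succ]; push_cast; push_cast at ih; ring_nf; ring_nf at ih; linarith
theorem coprime_int_of_not_dvd {p k : ℕ} (hp : p.Prime) (h : ¬ (p ∣ k)) :
    IsCoprime (p:ℤ) (k:ℤ) := by
  rw [Int.isCoprime_iff_gcd_eq_one]
  simpa [Int.gcd] using (Nat.Prime.coprime_iff_not_dvd hp).2 h
theorem dvd_sum_range_id {p : ℕ} (hp : p.Prime) (h3 : 3 < p) :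
    (p:ℤ) ∣ ∑ i ∈ range p, (i:ℤ) := by
  have h2 : (∑ i ∈ range p, (i:ℤ)) * 2 = p * ((p:ℤ) - 1) := by
    have h0 := Finset.sum_range_id_mul_two p
    have h4 := congrArg (Nat.cast : ℕ → ℤ) h0
    push_cast [Nat.cast_sub (by omega : 1 ≤ p)] at h4
    linarith
  have hdvd : (p:ℤ) ∣ (∑ i ∈ range p, (i:ℤ)) * 2 := ⟨(p:ℤ) - 1, h2⟩
  have hcop : IsCoprime (p:ℤ) (2:ℤ) := by
    have := coprime_int_of_not_dvd hp (k := 2) (fun h => by have := Nat.le_of_dvd (by norm_num) h; omega)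
    simpa using this
  exact hcop.dvd_of_dvd_mul_right hdvd
theorem dvd_sum_range_sq {p : ℕ} (hp : p.Prime) (h3 : 3 < p) :
    (p:ℤ) ∣ ∑ i ∈ range p, (i:ℤ)^2 := by
  have h6 : (p:ℤ) ∣ 6 * ∑ i ∈ range p, (i:ℤ)^2 :=
    six_mul_sum_sq p ▸ ⟨((p:ℤ)-1)*(2*p-1), by ring⟩
  have hcop : IsCoprime (p:ℤ) (6:ℤ) := by
    have h : ¬ (p ∣ 6) := by
      intro h; have := Nat.le_of_dvd (by norm_num) h
      interval_cases p <;> revert hp h <;> decide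
    have := coprime_int_of_not_dvd hp h
    simpa using this
  exact hcop.dvd_of_dvd_mul_left h6
theorem alg1 {A R : Type*} [CommRing R] [Ring A] [Algebra R A] (c : R) (u B S J un : A) :
    (un + c•S + (c^2)•J)*(u + c•B) = un*u + c•(S*u + un*B) + c^2•(J*u + S*B + c•(J*B)) := by
  simp only [mul_add, add_mul, smul_mul_assoc, mul_smul_comm, smul_add, smul_smul]
  ring_nf
  abel

theorem expand_pow {A R : Type*} [CommRing R] [Ring A] [Algebra R A] (c : R) (u B : A) (n : ℕ) :
    ∃ J : A, (u + c • B)^n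
      = u^n + c • (∑ i ∈ range n, u^i * B * u^(n-1-i)) + (c^2) • J := by
  induction n with
  | zero => exact ⟨0, by simp⟩
  | succ n ih =>
    obtain ⟨J, hJ⟩ := ih
    refine ⟨J * u + (∑ i ∈ range n, u^i * B * u^(n-1-i)) * B + c • (J * B), ?_⟩
    have hS : ∑ i ∈ range (n+1), u^i * B * u^(n+1-1-i)
        = (∑ i ∈ range n, u^i * B * u^(n-1-i)) * u + u^n * B := by
      rw [Finset.sum_range_succ, Finset.sum_mul]
      congr 1
      · refine Finset.sum_congr rfl fun i hi => ?_
        rw [mem_range] at hi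
        have h1 : n + 1 - 1 - i = (n - 1 - i) + 1 := by omega
        rw [h1, pow_succ, ← mul_assoc]
      · have h1 : n + 1 - 1 - n = 0 := by omega
        rw [h1, pow_zero, mul_one]
    rw [pow_succ, hJ, alg1, hS, ← pow_succ]
open Matrix
theorem unip_pow {A : Type*} [Ring A] (N : A) (h : N*N = 0) (i : ℕ) :
    (1+N)^i = 1 + i•N := by
  induction i with
  | zero => simp
  | succ i ih =>
    rw [pow_succ, ih, succ_nsmul]
    simp only [mul_add, add_mul, one_mul, mul_one, smul_mul_assoc, h, smul_zero]
    abel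
theorem sq_eq_zero {R : Type*} [CommRing R] (N : Matrix (Fin 2) (Fin 2) R)
    (ht : N.trace = 0) (hd : N.det = 0) : N*N = 0 := by
  rw [Matrix.trace_fin_two] at ht
  rw [Matrix.det_fin_two] at hd
  ext i j
  fin_cases i <;> fin_cases j <;>
    simp only [Matrix.mul_apply, Fin.sum_univ_two, Matrix.zero_apply, Fin.isValue, Fin.mk_zero, Fin.mk_one]
  · linear_combination N 0 0 * ht - hd
  · linear_combination N 0 1 * ht
  · linear_combination N 1 0 * ht
  · linear_combination N 1 1 * ht - hd
theorem alg2 {A R : Type*} [CommRing R] [Ring A] [Algebra R A] (a b : R) (N B : A) :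
    (1 + a•N) * B * (1 + b•N) = B + a•(N*B) + b•(B*N) + (a*b)•(N*B*N) := by
  simp only [mul_add, add_mul, one_mul, mul_one, smul_mul_assoc, mul_smul_comm]
  module

theorem dvd_sum_mixed {p : ℕ} (hp : p.Prime) (h3 : 3 < p) :
    (p:ℤ) ∣ ∑ i ∈ range p, (i:ℤ) * ((p-1-i : ℕ):ℤ) := by
  have hre : ∑ i ∈ range p, (i:ℤ) * ((p-1-i : ℕ):ℤ)
      = (∑ i ∈ range p, (i:ℤ)) * p - (∑ i ∈ range p, (i:ℤ)) - ∑ i ∈ range p, (i:ℤ)^2 := by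
    rw [Finset.sum_mul, ← Finset.sum_sub_distrib, ← Finset.sum_sub_distrib]
    refine Finset.sum_congr rfl fun i hi => ?_
    rw [mem_range] at hi
    rw [Nat.cast_sub (by omega), Nat.cast_sub (by omega)]
    push_cast
    ring
  rw [hre]
  exact dvd_sub (dvd_sub (dvd_mul_left _ _) (dvd_sum_range_id hp h3))
    (dvd_sum_range_sq hp h3)
section
variable {p : ℕ} [hpI : Fact p.Prime]
local notation "R" => PadicInt p
local notation "M" => Matrix (Fin 2) (Fin 2) (PadicInt p)


theorem pow_step (hp3 : 3 < p) {n : ℕ} (hn : 1 ≤ n) (A' : M) :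
    ∃ C : M, (1 + ((p:R)^n)•A')^p = 1 + ((p:R)^(n+1))•A' + ((p:R)^(n+2))•C := by
  have hp := hpI.out
  set Y : M := ((p:R)^n)•A' with hY
  have hbin : (1 + Y)^p = ∑ m ∈ range (p+1), Y^m * ((p.choose m : ℕ) : M) := by
    rw [add_comm]
    rw [Commute.add_pow (Commute.one_right Y) p]
    refine Finset.sum_congr rfl fun m _ => by rw [one_pow, mul_one]
  have hsplit : ∑ m ∈ range (p+1), Y^m * ((p.choose m : ℕ) : M)
      = (1 + (p:R)^(n+1)•A') + ∑ m ∈ Ico 2 (p+1), Y^m * ((p.choose m : ℕ) : M) := by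
    rw [Finset.range_eq_Ico, ← Finset.sum_Ico_consecutive _ (by omega : 0 ≤ 2) (by omega : 2 ≤ p+1)]
    congr 1
    have hI : Finset.Ico 0 2 = Finset.range 2 := by rw [Finset.range_eq_Ico]
    rw [hI]
    rw [Finset.sum_range_succ, Finset.sum_range_one]
    simp only [pow_zero, pow_one, Nat.choose_zero_right, Nat.choose_one_right, Nat.cast_one,
      mul_one]
    congr 1
    have : Y * ((p:ℕ) : M) = ((p:ℕ) : M) * Y := (Nat.cast_commute p Y).symm
    rw [this, ← nsmul_eq_mul, ← Nat.cast_smul_eq_nsmul R, hY, smul_smul, ← pow_succ']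
  have hmid : ∀ m ∈ Ico 2 (p+1), ∃ c : M,
      Y^m * ((p.choose m : ℕ) : M) = ((p:R)^(n+2)) • c := by
    intro m hm
    rw [Finset.mem_Ico] at hm
    have hYm : Y^m = ((p:R)^(n*m)) • A'^m := by
      rw [hY, smul_pow, ← pow_mul]
    have hdvd : ((p:R)^(n+2)) ∣ ((p:R)^(n*m)) * ((p.choose m : ℕ) : R) := by
      rcases eq_or_lt_of_le (by omega : m ≤ p) with hmp | hmp
    -- m = p
      · subst hmp
        rw [Nat.choose_self, Nat.cast_one, mul_one]
        exact pow_dvd_pow _ (by nlinarith)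
      · obtain ⟨k, hk⟩ := hp.dvd_choose_self (by omega) hmp
        rw [hk]
        push_cast
        rw [← mul_assoc]
        refine Dvd.dvd.mul_right ?_ _
        rw [← pow_succ]
        exact pow_dvd_pow _ (by nlinarith)
    obtain ⟨c, hc⟩ := hdvd
    refine ⟨c • A'^m, ?_⟩
    rw [hYm, smul_mul_assoc, ← nsmul_eq_mul', ← Nat.cast_smul_eq_nsmul R, smul_smul,
      hc, mul_smul]
  choose f hf using hmid
  refine ⟨∑ m ∈ (Ico 2 (p+1)).attach, f m.1 m.2, ?_⟩
  rw [hbin, hsplit, ← Finset.sum_attach (Ico 2 (p+1)) (fun m => Y^m * ((p.choose m : ℕ) : M))]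
  rw [Finset.sum_congr rfl (fun m _ => hf m.1 m.2), ← Finset.smul_sum, add_assoc]
end
section KeyBase
variable {p : ℕ} [hpI : Fact p.Prime]
local notation "R" => PadicInt p
local notation "M" => Matrix (Fin 2) (Fin 2) (PadicInt p)

theorem key_base (hp3 : 3 < p) (N B : M) (hN : N*N = 0) :
    Cong p 2 ((1 + N + (p:R)•B)^p) (1 + (p:R)•N) := by
  have hp := hpI.out
  obtain ⟨J, hJ⟩ := expand_pow (p:R) (1+N) B p
  -- powers of 1+N
  have hu : ∀ i : ℕ, (1+N)^i = 1 + ((i:ℕ):R)•N := by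
    intro i
    rw [unip_pow N hN i, Nat.cast_smul_eq_nsmul]
  -- the sum
  set S : M := ∑ i ∈ range p, (1+N)^i * B * (1+N)^(p-1-i) with hSdef
  have hterm : ∀ i ∈ range p, (1+N)^i * B * (1+N)^(p-1-i)
      = B + ((i:ℕ):R)•(N*B) + (((p-1-i:ℕ)):R)•(B*N)
        + (((i:ℕ):R) * (((p-1-i:ℕ)):R))•(N*B*N) := by
    intro i _
    rw [hu i, hu (p-1-i), alg2]
  have hS : S = ((p:ℕ):R)•B + (∑ i ∈ range p, ((i:ℕ):R))•(N*B)
      + (∑ i ∈ range p, (((p-1-i:ℕ)):R))•(B*N)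
      + (∑ i ∈ range p, ((i:ℕ):R) * (((p-1-i:ℕ)):R))•(N*B*N) := by
    rw [hSdef, Finset.sum_congr rfl hterm, Finset.sum_add_distrib, Finset.sum_add_distrib,
      Finset.sum_add_distrib, Finset.sum_const, Finset.sum_smul, Finset.sum_smul,
      Finset.sum_smul, Nat.cast_smul_eq_nsmul, Finset.card_range]
  -- divisibilities
  have φdvd : ∀ z : ℤ, (p:ℤ) ∣ z → (p:R) ∣ ((z:ℤ):R) := by
    intro z hz
    obtain ⟨c, rfl⟩ := hz
    exact ⟨((c:ℤ):R), by push_cast; ring⟩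
  have hd1 : (p:R) ∣ ∑ i ∈ range p, ((i:ℕ):R) := by
    have := φdvd _ (dvd_sum_range_id hp hp3)
    rwa [Int.cast_sum, Finset.sum_congr rfl (fun i _ => by push_cast; rfl)] at this
  have hd2 : (p:R) ∣ ∑ i ∈ range p, (((p-1-i:ℕ)):R) := by
    have hrefl : ∑ i ∈ range p, (((p-1-i:ℕ)):R) = ∑ i ∈ range p, ((i:ℕ):R) :=
      Finset.sum_range_reflect (fun j => ((j:ℕ):R)) p
    rw [hrefl]; exact hd1
  have hd3 : (p:R) ∣ ∑ i ∈ range p, ((i:ℕ):R) * (((p-1-i:ℕ)):R) := by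
    have := φdvd _ (dvd_sum_mixed hp hp3)
    rwa [Int.cast_sum, Finset.sum_congr rfl (fun i _ => by push_cast; rfl)] at this
  obtain ⟨w1, hw1⟩ := hd1
  obtain ⟨w2, hw2⟩ := hd2
  obtain ⟨w3, hw3⟩ := hd3
  refine ⟨B + w1•(N*B) + w2•(B*N) + w3•(N*B*N) + J, ?_⟩
  have h1N : 1 + N + (p:R)•B = (1+N) + (p:R)•B := rfl
  rw [h1N, hJ, hu p, hS, hw1, hw2, hw3]
  simp only [smul_add, smul_smul, mul_smul_comm, smul_mul_assoc]
  ring_nf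
  abel
end KeyBase

theorem det_one_add_fin_two {S : Type*} [CommRing S] (N : Matrix (Fin 2) (Fin 2) S) :
    (1 + N).det = 1 + N.trace + N.det := by
  rw [Matrix.det_fin_two, Matrix.det_fin_two, Matrix.trace_fin_two]
  simp [Matrix.add_apply, Matrix.one_apply]
  ring

section Red
variable {p : ℕ} [hpI : Fact p.Prime]
local notation "R" => PadicInt p
local notation "M" => Matrix (Fin 2) (Fin 2) (PadicInt p)
local notation "G" => Matrix.SpecialLinearGroup (Fin 2) (PadicInt p)

theorem red_eq (x u : G)
    (h : Matrix.SpecialLinearGroup.map (PadicInt.toZMod : ℤ_[p] →+* ZMod p) x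
       = Matrix.SpecialLinearGroup.map (PadicInt.toZMod : ℤ_[p] →+* ZMod p) u) :
    ∃ B : M, (x : M) = (u : M) + (p:R) • B := by
  have h1 : ∀ i j, PadicInt.toZMod ((x : M) i j) = PadicInt.toZMod ((u : M) i j) := by
    intro i j
    have h2 := congrArg (Subtype.val) h
    have h3 := congrFun (congrFun h2 i) j
    exact h3
  have h4 : ∀ i j, ∃ b : R, (x : M) i j = (u : M) i j + p * b := by
    intro i j
    have h5 : (x : M) i j - (u : M) i j ∈ RingHom.ker (PadicInt.toZMod : ℤ_[p] →+* ZMod p) := by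
      rw [RingHom.mem_ker, map_sub, h1 i j, sub_self]
    rw [PadicInt.ker_toZMod, PadicInt.maximalIdeal_eq_span_p, Ideal.mem_span_singleton] at h5
    obtain ⟨b, hb⟩ := h5
    exact ⟨b, by linear_combination hb⟩
  choose b hb using h4
  refine ⟨Matrix.of b, ?_⟩
  ext i j
  simp only [Matrix.add_apply, Matrix.smul_apply, Matrix.of_apply, smul_eq_mul]
  exact hb i j
end Red
section K
variable {p : ℕ} [hpI : Fact p.Prime]
local notation "R" => PadicInt p
local notation "M" => Matrix (Fin 2) (Fin 2) (PadicInt p)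
local notation "G" => Matrix.SpecialLinearGroup (Fin 2) (PadicInt p)

theorem Klem (hp3 : 3 < p) (Δ : Subgroup G)
    (hsurj : ∀ y : Matrix.SpecialLinearGroup (Fin 2) (ZMod p), ∃ x ∈ Δ,
      Matrix.SpecialLinearGroup.map (PadicInt.toZMod : ℤ_[p] →+* ZMod p) x = y)
    (n : ℕ) (hn : 1 ≤ n) (A : M) (hA : (p:R) ∣ A.trace) :
    ∃ x ∈ Δ, Cong p (n+1) (x : M) (1 + ((p:R)^n) • A) := by
  induction n with
  | zero => omega
  | succ n ih =>
    rcases Nat.eq_or_lt_of_le hn with hn1 | hn2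
    · -- base case : n + 1 = 1
      have hn0 : n = 0 := by omega
      subst hn0
      obtain ⟨τ, hτ⟩ := hA
      rw [Matrix.trace_fin_two] at hτ
      set a := A 0 0 with ha
      set b := A 0 1 with hb
      set c := A 1 0 with hc
      set N1 : M := !![a, a; -a, -a] with hN1
      set N2 : M := !![0, b - a; 0, 0] with hN2
      set N3 : M := !![0, 0; c + a, 0] with hN3
      set T : M := !![0, 0; 0, τ] with hT
      have hAdec : A = N1 + N2 + N3 + (p:R) • T := by
        ext i j
        fin_cases i <;> fin_cases j <;>
          simp [hN1, hN2, hN3, hT, Matrix.add_apply, Matrix.smul_apply, smul_eq_mul] <;>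
          simp only [ha, hb, hc] at hτ ⊢ <;> linear_combination hτ
      have key : ∀ N : M, N.trace = 0 → N.det = 0 → (1 + N).det = 1 → 
          ∃ x ∈ Δ, Cong p 2 ((x:M)^p) (1 + (p:R)•N) := by
        intro N htr hdet hu
        obtain ⟨x, hxΔ, hxmap⟩ := hsurj
          (Matrix.SpecialLinearGroup.map (PadicInt.toZMod : ℤ_[p] →+* ZMod p) ⟨1 + N, hu⟩)
        obtain ⟨B, hB⟩ := red_eq x ⟨1 + N, hu⟩ hxmap
        refine ⟨x, hxΔ, ?_⟩
        have hx : (x : M) = 1 + N + (p:R) • B := by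
          rw [hB]
        rw [hx]
        exact key_base hp3 N B (sq_eq_zero N htr hdet)
      have h1 : ∃ x ∈ Δ, Cong p 2 ((x:M)^p) (1 + (p:R)•N1) := by
        refine key N1 ?_ ?_ ?_ <;>
          simp [hN1, Matrix.trace_fin_two, Matrix.det_fin_two, det_one_add_fin_two,
            Matrix.trace_fin_two] <;> ring
      have h2 : ∃ x ∈ Δ, Cong p 2 ((x:M)^p) (1 + (p:R)•N2) := by
        refine key N2 ?_ ?_ ?_ <;>
          simp [hN2, Matrix.trace_fin_two, Matrix.det_fin_two, det_one_add_fin_two]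
      have h3 : ∃ x ∈ Δ, Cong p 2 ((x:M)^p) (1 + (p:R)•N3) := by
        refine key N3 ?_ ?_ ?_ <;>
          simp [hN3, Matrix.trace_fin_two, Matrix.det_fin_two, det_one_add_fin_two]
      obtain ⟨x1, hx1Δ, hc1⟩ := h1
      obtain ⟨x2, hx2Δ, hc2⟩ := h2
      obtain ⟨x3, hx3Δ, hc3⟩ := h3
      refine ⟨x1^p * x2^p * x3^p, mul_mem (mul_mem (pow_mem hx1Δ p) (pow_mem hx2Δ p))
        (pow_mem hx3Δ p), ?_⟩
      have hcoe : ((x1^p * x2^p * x3^p : G) : M) = (x1:M)^p * (x2:M)^p * (x3:M)^p := by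
        simp [Matrix.SpecialLinearGroup.coe_mul, Matrix.SpecialLinearGroup.coe_pow]
      rw [hcoe]
      have hprod : Cong p 2 ((x1:M)^p * (x2:M)^p * (x3:M)^p)
          ((1 + (p:R)•N1) * (1 + (p:R)•N2) * (1 + (p:R)•N3)) :=
        cong_mul (cong_mul hc1 hc2) hc3
      refine cong_trans hprod ?_
      refine ⟨(N1*N2 + N1*N3 + N2*N3) - T + (p:R)•(N1*N2*N3), ?_⟩
      rw [hAdec]
      simp only [pow_one, mul_add, add_mul, one_mul, mul_one, smul_add, smul_mul_assoc,
        mul_smul_comm, smul_smul]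
      module
    · -- inductive step
      have hn' : 1 ≤ n := by omega
      obtain ⟨x, hxΔ, hcx⟩ := ih hn'
      obtain ⟨E, hE⟩ := hcx
      have hx : (x : M) = 1 + ((p:R)^n) • (A + (p:R) • E) := by
        rw [hE]
        rw [smul_add, smul_smul, ← pow_succ, ← add_assoc]
      obtain ⟨C, hC⟩ := pow_step hp3 hn' (A + (p:R) • E)
      refine ⟨x^p, pow_mem hxΔ p, ?_⟩
      refine ⟨C + E, ?_⟩
      rw [Matrix.SpecialLinearGroup.coe_pow, hx, hC]
      rw [smul_add, smul_smul, ← pow_succ, smul_add]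
      module
  end K
section Main
variable {p : ℕ} [hpI : Fact p.Prime]
local notation "R" => PadicInt p
local notation "M" => Matrix (Fin 2) (Fin 2) (PadicInt p)
local notation "G" => Matrix.SpecialLinearGroup (Fin 2) (PadicInt p)

theorem main_approx (hp3 : 3 < p) (Δ : Subgroup G)
    (hsurj : ∀ y : Matrix.SpecialLinearGroup (Fin 2) (ZMod p), ∃ x ∈ Δ,
      Matrix.SpecialLinearGroup.map (PadicInt.toZMod : ℤ_[p] →+* ZMod p) x = y)
    (n : ℕ) (g : G) : ∃ δ ∈ Δ, Cong p n (δ : M) (g : M) := by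
  induction n with
  | zero =>
    exact ⟨1, one_mem Δ, ⟨(1:G) - (g:M), by simp⟩⟩
  | succ n ih =>
    rcases Nat.eq_zero_or_pos n with hn0 | hn1
    · subst hn0
      obtain ⟨x, hxΔ, hxmap⟩ := hsurj
        (Matrix.SpecialLinearGroup.map (PadicInt.toZMod : ℤ_[p] →+* ZMod p) g)
      obtain ⟨B, hB⟩ := red_eq x g hxmap
      exact ⟨x, hxΔ, ⟨B, by rw [hB, pow_one]⟩⟩
    · obtain ⟨δ₀, hδ₀Δ, hc⟩ := ih
      obtain ⟨C, hC⟩ := hc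
      set A : M := -(C * ((δ₀⁻¹ : G) : M)) with hAdef
      have hinv : ((δ₀ : G) : M) * ((δ₀⁻¹ : G) : M) = 1 := by
        rw [← Matrix.SpecialLinearGroup.coe_mul, mul_inv_cancel,
          Matrix.SpecialLinearGroup.coe_one]
      have hgd : ((g * δ₀⁻¹ : G) : M) = 1 + ((p:R)^n) • A := by
        rw [Matrix.SpecialLinearGroup.coe_mul]
        have hg : (g : M) = (δ₀ : M) - ((p:R)^n) • C := by
          rw [hC]; abel
        rw [hg, sub_mul, smul_mul_assoc, hinv, hAdef, smul_neg, sub_eq_add_neg]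
      -- trace divisibility
      have hdet1 : (1 + ((p:R)^n) • A).det = 1 := by
        rw [← hgd]
        exact Matrix.SpecialLinearGroup.det_coe _
      have hkey : A.trace = -((p:R)^n * A.det) := by
        rw [det_one_add_fin_two, Matrix.trace_smul, Matrix.det_smul, smul_eq_mul] at hdet1
        have h2 : ((p:R)^n) * (A.trace + (p:R)^n * A.det) = 0 := by
          have : Fintype.card (Fin 2) = 2 := rfl
          rw [this] at hdet1
          ring_nf
          ring_nf at hdet1
          linear_combination hdet1
        have hpn : ((p:R)^n) ≠ 0 := by
          apply pow_ne_zero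
          exact_mod_cast Nat.cast_ne_zero.mpr hpI.out.ne_zero
        have := mul_eq_zero.mp h2
        rcases this with h | h
        · exact absurd h hpn
        · linear_combination h
      have hAtr : (p:R) ∣ A.trace := by
        rw [hkey, dvd_neg]
        exact Dvd.dvd.mul_right (dvd_pow_self (p:R) (by omega)) _
      obtain ⟨y, hyΔ, hy⟩ := Klem hp3 Δ hsurj n hn1 A hAtr
      refine ⟨y * δ₀, mul_mem hyΔ hδ₀Δ, ?_⟩
      have h3 : Cong p (n+1) ((y * δ₀ : G) : M) (((g * δ₀⁻¹ : G) : M) * ((δ₀ : G) : M)) := by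
        rw [Matrix.SpecialLinearGroup.coe_mul]
        exact cong_mul (by rw [hgd]; exact hy) (cong_refl _ _)
      refine cong_trans h3 (cong_of_eq ?_)
      rw [← Matrix.SpecialLinearGroup.coe_mul, inv_mul_cancel_right]
end Main


end SerreSL2

open Matrix Finset Filter Topology in
/-- (Serre) Let `p > 3` be a prime and `Δ` a closed subgroup of `SL₂(ℤ_p)`
whose image under the reduction map `ρ_p : SL₂(ℤ_p) → SL₂(𝔽_p)` is all of
`SL₂(𝔽_p)`.  Then `Δ = SL₂(ℤ_p)`. -/
theorem closed_subgroup_surjecting_mod_p_is_full (p : ℕ) [Fact p.Prime]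
    (hp : 3 < p) (Δ : Subgroup (Matrix.SpecialLinearGroup (Fin 2) ℤ_[p]))
    (hclosed : IsClosed (Δ : Set (Matrix.SpecialLinearGroup (Fin 2) ℤ_[p])))
    (hsurj : Subgroup.map
        (Matrix.SpecialLinearGroup.map (PadicInt.toZMod :
          ℤ_[p] →+* ZMod p)) Δ = ⊤) :
    Δ = ⊤ := by
  have hpfact : Fact p.Prime := inferInstance
  have hprime := hpfact.out
  have hsurj' : ∀ y : Matrix.SpecialLinearGroup (Fin 2) (ZMod p), ∃ x ∈ Δ,
      Matrix.SpecialLinearGroup.map (PadicInt.toZMod : ℤ_[p] →+* ZMod p) x = y := by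
    intro y
    have hy : y ∈ Subgroup.map
        (Matrix.SpecialLinearGroup.map (PadicInt.toZMod : ℤ_[p] →+* ZMod p)) Δ := by
      rw [hsurj]; trivial
    obtain ⟨x, hxΔ, hx⟩ := Subgroup.mem_map.mp hy
    exact ⟨x, hxΔ, hx⟩
  rw [eq_top_iff]
  intro g _
  choose δ hδΔ hδc using fun n => SerreSL2.main_approx hp Δ hsurj' n g
  have hcoe : Tendsto (fun n => ((δ n : Matrix.SpecialLinearGroup (Fin 2) ℤ_[p]) :
      Matrix (Fin 2) (Fin 2) ℤ_[p])) atTop (𝓝 (g : Matrix (Fin 2) (Fin 2) ℤ_[p])) := by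
    refine tendsto_pi_nhds.2 ?_
    intro i
    refine tendsto_pi_nhds.2 ?_
    intro j
    rw [tendsto_iff_norm_sub_tendsto_zero]
    refine squeeze_zero (g := fun n => ((p:ℝ)⁻¹)^n) (fun n => norm_nonneg _) ?_ ?_
    · intro n
      obtain ⟨C, hC⟩ := hδc n
      rw [hC]
      have h1 : (((g : Matrix (Fin 2) (Fin 2) ℤ_[p])) + ((p:ℤ_[p])^n) • C) i j
          - (g : Matrix (Fin 2) (Fin 2) ℤ_[p]) i j = (p:ℤ_[p])^n * C i j := by
        simp [Matrix.add_apply, Matrix.smul_apply, smul_eq_mul]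
      rw [h1, norm_mul]
      calc ‖((p:ℤ_[p])^n : ℤ_[p])‖ * ‖C i j‖ ≤ ‖((p:ℤ_[p])^n : ℤ_[p])‖ * 1 :=
            mul_le_mul_of_nonneg_left (PadicInt.norm_le_one _) (norm_nonneg _)
        _ = ((p:ℝ)⁻¹)^n := by
            rw [mul_one, norm_pow, PadicInt.norm_p, inv_pow]
    · exact tendsto_pow_atTop_nhds_zero_of_lt_one (by positivity)
        (by rw [inv_lt_one_iff₀]; right; exact_mod_cast hprime.one_lt)
  have htend : Tendsto δ atTop (𝓝 g) := by
    erw [nhds_induced ((↑) : Matrix.SpecialLinearGroup (Fin 2) ℤ_[p] →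
      Matrix (Fin 2) (Fin 2) ℤ_[p]), tendsto_comap_iff]
    exact hcoe
  exact hclosed.mem_of_tendsto htend (Filter.Eventually.of_forall hδΔ)
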